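/- Let A be the adjacency matrix of a signed graph Σ on n vertices with eigenvalue μ ∉ {0,1,−1}, star set S of size k, star complement adjacency matrix C of size t = n−k, and columns s_1,…,s_n of S = (B | C − μI). Then the n functions F_u : ℝ^t → ℝ defined by F_u(x) = (s_uᵀ(μI−C)⁻¹x)³ are linearly independent. -/

import Mathlib

open Matrix

/-- The bilinear form `⟨x, y⟩ = xᵀ (μI - C)⁻¹ y` associated with a star complement. -/
noncomputable def starBilin {t : ℕ} (μ : ℝ) (C : Matrix (Fin t) (Fin t) ℝ) (x y : Fin t → ℝ) : ℝ :=
  x ⬝ᵥ ((μ • (1 : Matrix (Fin t) (Fin t) ℝ) - C)⁻¹).mulVec y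

theorem cubic_functions_linearly_independent {k t : ℕ}
    (AS : Matrix (Fin k) (Fin k) ℝ) (B : Matrix (Fin t) (Fin k) ℝ)
    (C : Matrix (Fin t) (Fin t) ℝ)
    (A : Matrix (Fin k ⊕ Fin t) (Fin k ⊕ Fin t) ℝ)
    (hA : A = Matrix.fromBlocks AS Bᵀ B C)
    (hsymm : A.IsSymm)
    (hentries : ∀ p q, A p q ∈ ({0, 1, -1} : Set ℝ))
    (hdiag : ∀ p, A p p = 0)
    (μ : ℝ) (hμ : μ ∉ ({0, 1, -1} : Set ℝ))
    (hC : ¬ ∃ v : Fin t → ℝ, v ≠ 0 ∧ C.mulVec v = μ • v)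
    (hrec : μ • (1 : Matrix (Fin k) (Fin k) ℝ) - AS =
      Bᵀ * (μ • (1 : Matrix (Fin t) (Fin t) ℝ) - C)⁻¹ * B)
    (S : Matrix (Fin t) (Fin k ⊕ Fin t) ℝ)
    (hS : S = Matrix.fromCols B (C - μ • (1 : Matrix (Fin t) (Fin t) ℝ)))
    (F : (Fin k ⊕ Fin t) → (Fin t → ℝ) → ℝ)
    (hF : ∀ u x, F u x = (starBilin μ C (fun i => S i u) x) ^ 3) :
    LinearIndependent ℝ F := by
  classical
  simp only [Set.mem_insert_iff, Set.mem_singleton_iff, not_or] at hμ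
  obtain ⟨hμ0, hμ1, hμm1⟩ := hμ
  set M : Matrix (Fin t) (Fin t) ℝ := μ • (1 : Matrix (Fin t) (Fin t) ℝ) - C with hMdef
  set W : Matrix (Fin t) (Fin t) ℝ := M⁻¹ with hWdef
  -- M is invertible
  have hdet : IsUnit M.det := by
    rw [isUnit_iff_ne_zero]
    intro h0
    obtain ⟨v, hv0, hv⟩ := (Matrix.exists_mulVec_eq_zero_iff).2 h0
    refine hC ⟨v, hv0, ?_⟩
    have h1 : μ • v - C.mulVec v = 0 := by
      have := hv
      rw [hMdef, Matrix.sub_mulVec, Matrix.smul_mulVec, Matrix.one_mulVec] at this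
      exact this
    have := sub_eq_zero.mp h1
    exact this.symm
  have hWM : W * M = 1 := Matrix.nonsing_inv_mul M hdet
  have hMW : M * W = 1 := Matrix.mul_nonsing_inv M hdet
  -- symmetry of the blocks
  have hCsymm : Cᵀ = C := by
    ext i j
    have h1 := congrFun (congrFun hsymm (Sum.inr i)) (Sum.inr j)
    simpa [hA, Matrix.transpose_apply] using h1
  have hMsymm : Mᵀ = M := by
    rw [hMdef, Matrix.transpose_sub, Matrix.transpose_smul, Matrix.transpose_one, hCsymm]
  -- the bilinear form via W
  set f : (Fin k ⊕ Fin t) → (Fin t → ℝ) → ℝ :=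
    fun u x => (fun i => S i u) ⬝ᵥ W.mulVec x with hfdef
  have hfF : ∀ u x, F u x = (f u x) ^ 3 := by
    intro u x
    rw [hF]
    rfl
  -- linearity of f in the second argument
  have hf_add : ∀ u x y, f u (x + y) = f u x + f u y := by
    intro u x y
    simp [hfdef, Matrix.mulVec_add, dotProduct_add]
  have hf_sub : ∀ u x y, f u (x - y) = f u x - f u y := by
    intro u x y
    simp [hfdef, Matrix.mulVec_sub, dotProduct_sub]
  -- the Gram matrix identity  Sᵀ W S = μ I - A
  have hGram : Sᵀ * W * S = μ • (1 : Matrix (Fin k ⊕ Fin t) (Fin k ⊕ Fin t) ℝ) - A := by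
    have hS' : S = Matrix.fromCols B (-M) := by
      rw [hS, hMdef, neg_sub]
    have hWB : W * B = W * B := rfl
    rw [hS', Matrix.transpose_fromCols, Matrix.transpose_neg, hMsymm,
      Matrix.mul_assoc, Matrix.mul_fromCols, Matrix.fromRows_mul_fromCols]
    have e11 : Bᵀ * (W * B) = μ • (1 : Matrix (Fin k) (Fin k) ℝ) - AS := by
      rw [← Matrix.mul_assoc]; exact hrec.symm
    have e12 : Bᵀ * (W * -M) = -Bᵀ := by
      rw [Matrix.mul_neg, hWM, Matrix.mul_neg, Matrix.mul_one]
    have e21 : (-M) * (W * B) = -B := by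
      rw [Matrix.neg_mul, ← Matrix.mul_assoc, hMW, Matrix.one_mul]
    have e22 : (-M) * (W * -M) = M := by
      rw [Matrix.mul_neg, hWM, Matrix.neg_mul, Matrix.mul_neg, Matrix.mul_one, neg_neg]
    rw [e11, e12, e21, e22, hA, hMdef]
    ext (i | i) (j | j) <;>
      simp [Matrix.sub_apply, Matrix.smul_apply, Matrix.one_apply]
  -- entrywise Gram identity
  have hGuv : ∀ u v, f u (fun i => S i v) =
      (μ • (1 : Matrix (Fin k ⊕ Fin t) (Fin k ⊕ Fin t) ℝ) - A) u v := by
    intro u v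
    have h1 := congrFun (congrFun hGram u) v
    rw [← h1]
    simp only [hfdef, Matrix.mul_apply, dotProduct, Matrix.mulVec, dotProduct,
      Matrix.transpose_apply, Finset.sum_mul, Finset.mul_sum]
    rw [Finset.sum_comm]
    apply Finset.sum_congr rfl
    intro i _
    apply Finset.sum_congr rfl
    intro j _
    ring
  have hGdiag : ∀ u, f u (fun i => S i u) = μ := by
    intro u
    rw [hGuv]
    simp [Matrix.sub_apply, Matrix.smul_apply, Matrix.one_apply, hdiag u]
  have hGval : ∀ u v, f u (fun i => S i v) = (if u = v then μ else 0) - A u v := by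
    intro u v
    rw [hGuv]
    by_cases h : u = v <;>
      simp [Matrix.sub_apply, Matrix.smul_apply, Matrix.one_apply, h]
  have hAsym : ∀ u v, A u v = A v u := by
    intro u v
    simpa using congrFun (congrFun hsymm v) u
  -- main argument
  rw [Fintype.linearIndependent_iff]
  intro g hg
  have hcube : ∀ x, ∑ u, g u * (f u x) ^ 3 = 0 := by
    intro x
    have := congrFun hg x
    simpa [Finset.sum_apply, hfF, Pi.smul_apply, smul_eq_mul] using this
  -- polarization
  have hpol : ∀ x y, ∑ u, g u * (f u x) ^ 2 * f u y = 0 := by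
    intro x y
    have h1 := hcube (x + y)
    have h2 := hcube (x - y)
    have h3 := hcube y
    have key : (∑ u, g u * (f u (x + y)) ^ 3) - (∑ u, g u * (f u (x - y)) ^ 3)
        = 6 * (∑ u, g u * (f u x) ^ 2 * f u y) + 2 * (∑ u, g u * (f u y) ^ 3) := by
      rw [← Finset.sum_sub_distrib, Finset.mul_sum, Finset.mul_sum, ← Finset.sum_add_distrib]
      apply Finset.sum_congr rfl
      intro u _
      rw [hf_add, hf_sub]
      ring
    rw [h1, h2, h3] at key
    linarith
  -- g is an eigenvector of A with eigenvalue μ^3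
  have hAg : A.mulVec g = (μ ^ 3) • g := by
    funext v
    have h1 := hcube (fun i => S i v)
    have h2 : ∀ u, g u * (f u (fun i => S i v)) ^ 3
        = (if u = v then μ ^ 3 * g u else 0) - A v u * g u := by
      intro u
      rw [hGval]
      have h0 := hentries u v
      simp only [Set.mem_insert_iff, Set.mem_singleton_iff] at h0
      by_cases h : u = v
      · subst h
        rw [hdiag]
        simp
        ring
      · rw [hAsym v u]
        rcases h0 with h0 | h0 | h0 <;> rw [h0] <;> simp [h] <;> ring
    rw [Finset.sum_congr rfl (fun u _ => h2 u), Finset.sum_sub_distrib,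
      Finset.sum_ite_eq' Finset.univ v (fun u => μ ^ 3 * g u)] at h1
    simp only [Finset.mem_univ, if_true] at h1
    have : (A.mulVec g) v = ∑ u, A v u * g u := by
      simp [Matrix.mulVec, dotProduct]
    rw [this, Pi.smul_apply, smul_eq_mul]
    linarith
  -- key claim: for every x and u, g u * f u x = 0
  have hzero : ∀ x u, g u * f u x = 0 := by
    intro x
    set γ : (Fin k ⊕ Fin t) → ℝ := fun u => g u * (f u x) ^ 2 with hγdef
    -- S γ = 0
    have hSγ : S.mulVec γ = 0 := by
      have hdz : ∀ z : Fin t → ℝ, (S.mulVec γ) ⬝ᵥ z = 0 := by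
        intro z
        have h1 := hpol x (M.mulVec z)
        have h2 : ∀ u, f u (M.mulVec z) = (fun i => S i u) ⬝ᵥ z := by
          intro u
          rw [hfdef]
          simp only []
          rw [Matrix.mulVec_mulVec, hWM, Matrix.one_mulVec]
        have h3 : (S.mulVec γ) ⬝ᵥ z = ∑ u, γ u * ((fun i => S i u) ⬝ᵥ z) := by
          simp only [Matrix.mulVec, dotProduct, Finset.sum_mul, Finset.mul_sum]
          rw [Finset.sum_comm]
          apply Finset.sum_congr rfl
          intro u _
          apply Finset.sum_congr rfl
          intro i _
          ring
        rw [h3, ← h1]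
        apply Finset.sum_congr rfl
        intro u _
        rw [h2 u, hγdef]
      have := hdz (S.mulVec γ)
      exact dotProduct_self_eq_zero.mp this
    -- γ is an eigenvector of A with eigenvalue μ (or zero)
    have hAγ : A.mulVec γ = μ • γ := by
      have hγelim : γ = Sum.elim (γ ∘ Sum.inl) (γ ∘ Sum.inr) := by
        funext u; cases u <;> rfl
      have hSγ' : B.mulVec (γ ∘ Sum.inl)
          + (C - μ • (1 : Matrix (Fin t) (Fin t) ℝ)).mulVec (γ ∘ Sum.inr) = 0 := by
        rw [← Matrix.fromCols_mulVec_sumElim, ← hγelim, ← hS]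
        exact hSγ
      have hBγ : B.mulVec (γ ∘ Sum.inl) = M.mulVec (γ ∘ Sum.inr) := by
        have h4 : (C - μ • (1 : Matrix (Fin t) (Fin t) ℝ)) = -M := (neg_sub _ _).symm
        rw [h4, Matrix.neg_mulVec] at hSγ'
        exact add_neg_eq_zero.mp hSγ'
      have hγ2eq : γ ∘ Sum.inr = W.mulVec (B.mulVec (γ ∘ Sum.inl)) := by
        rw [hBγ, Matrix.mulVec_mulVec, hWM, Matrix.one_mulVec]
      have htop : AS.mulVec (γ ∘ Sum.inl) + Bᵀ.mulVec (γ ∘ Sum.inr)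
          = μ • (γ ∘ Sum.inl) := by
        rw [hγ2eq, Matrix.mulVec_mulVec, Matrix.mulVec_mulVec, ← hrec,
          Matrix.sub_mulVec, Matrix.smul_mulVec, Matrix.one_mulVec]
        abel
      have hbot : B.mulVec (γ ∘ Sum.inl) + C.mulVec (γ ∘ Sum.inr)
          = μ • (γ ∘ Sum.inr) := by
        rw [hBγ, hMdef, Matrix.sub_mulVec, Matrix.smul_mulVec, Matrix.one_mulVec]
        abel
      rw [hA, Matrix.fromBlocks_mulVec, htop, hbot]
      funext u; cases u <;> rfl
    -- orthogonality
    have horth : g ⬝ᵥ γ = 0 := by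
      have h1 : A.mulVec g ⬝ᵥ γ = g ⬝ᵥ A.mulVec γ := by
        rw [Matrix.dotProduct_mulVec g A γ, ← Matrix.mulVec_transpose, hsymm.eq]
      rw [hAg, hAγ] at h1
      have h2 : (μ ^ 3) * (g ⬝ᵥ γ) = μ * (g ⬝ᵥ γ) := by
        rw [smul_dotProduct, dotProduct_smul] at h1
        simpa [smul_eq_mul] using h1
      have hne : μ ^ 3 ≠ μ := by
        intro h
        have : μ * (μ - 1) * (μ + 1) = 0 := by linear_combination h
        rcases mul_eq_zero.mp this with h' | h'
        · rcases mul_eq_zero.mp h' with h'' | h''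
          · exact hμ0 h''
          · exact hμ1 (by linarith)
        · exact hμm1 (by linarith)
      have h3 : (μ ^ 3 - μ) * (g ⬝ᵥ γ) = 0 := by linear_combination h2
      rcases mul_eq_zero.mp h3 with h' | h'
      · exact absurd (by linarith : μ ^ 3 = μ) hne
      · exact h'
    -- sum of squares is zero
    have hsq : ∑ u, (g u * f u x) ^ 2 = 0 := by
      rw [← horth]
      simp only [dotProduct, hγdef]
      apply Finset.sum_congr rfl
      intro u _
      ring
    intro u
    have h5 : (g u * f u x) ^ 2 = 0 := by
      have := (Finset.sum_eq_zero_iff_of_nonneg (fun v _ => sq_nonneg (g v * f v x))).mp hsq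
      exact this u (Finset.mem_univ u)
    exact pow_eq_zero_iff (by norm_num) |>.mp h5
  intro u
  have h6 := hzero (fun i => S i u) u
  rw [hGdiag] at h6
  rcases mul_eq_zero.mp h6 with h' | h'
  · exact h'
  · exact absurd h' hμ0
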